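/- A semistandard tableau T of shape λ with entries in the positive integers is distinguished (i.e. μ-distinguished for some partition μ) if and only if, for every integer i ≥ 1, the skew tableau obtained from T by keeping only the letters 2i-1 and 2i is a reverse lattice skew tableau on {2i-1, 2i}, and all rows of the partition θ(T) = φ(T) + μ_T have even lengths. -/

import Mathlib

open scoped Classical

noncomputable section

namespace GE

/-- The coefficient of the `i`-th fundamental weight (`i ≥ 1`) in the dominant weight
corresponding to the partition `μ`: the number of columns of the Young diagram of `μ`
of height exactly `i`. -/
def coord (μ : YoungDiagram) (i : ℕ) : ℕ := μ.rowLen (i - 1) - μ.rowLen i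

/-- The Japanese reading word of a semistandard Young tableau: columns are read from right
to left, each column from top to bottom. -/
def jword {μ : YoungDiagram} (T : SemistandardYoungTableau μ) : List ℕ :=
  (((List.range (μ.rowLen 0)).reverse).map fun j =>
    (List.range (μ.colLen j)).map fun i => T i j).flatten

/-- The crystal statistic `ε_i` of a word, via the bracketing rule. -/
def wordEps (i : ℕ) (w : List ℕ) : ℕ :=
  (Finset.range (w.length + 1)).sup fun k => (w.take k).count (i + 1) - (w.take k).count i

/-- The crystal statistic `φ_i` of a word, via the bracketing rule. -/
def wordPhi (i : ℕ) (w : List ℕ) : ℕ :=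
  (Finset.range (w.length + 1)).sup fun k => (w.drop k).count i - (w.drop k).count (i + 1)

/-- The crystal statistic `ε_i` of a semistandard tableau. -/
def eps (i : ℕ) {μ : YoungDiagram} (T : SemistandardYoungTableau μ) : ℕ := wordEps i (jword T)

/-- The crystal statistic `φ_i` of a semistandard tableau. -/
def phi (i : ℕ) {μ : YoungDiagram} (T : SemistandardYoungTableau μ) : ℕ := wordPhi i (jword T)

/-- The number of entries of `T` equal to `k`. -/
def cnt {μ : YoungDiagram} (T : SemistandardYoungTableau μ) (k : ℕ) : ℕ := (jword T).count k

/-- All entries of `T` lie in the alphabet `{1, …, m}`. -/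
def EntriesIn {μ : YoungDiagram} (T : SemistandardYoungTableau μ) (m : ℕ) : Prop :=
  ∀ i j, (i, j) ∈ μ → 1 ≤ T i j ∧ T i j ≤ m

/-- All entries of `T` are positive integers. -/
def PosEntries {μ : YoungDiagram} (T : SemistandardYoungTableau μ) : Prop :=
  ∀ i j, (i, j) ∈ μ → 1 ≤ T i j

/-- The partition `ν` has all parts even (`ν ∈ 𝒫^{(2)}`). -/
def EvenParts (ν : YoungDiagram) : Prop := ∀ i, Even (ν.rowLen i)

/-- Every part of `δ` occurs with even multiplicity, i.e. `δ_{2i-1} = δ_{2i}` for all `i ≥ 1`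
(`δ ∈ 𝒫^{(1,1)}`). -/
def EvenMult (δ : YoungDiagram) : Prop := ∀ i, δ.rowLen (2 * i) = δ.rowLen (2 * i + 1)

/-- `b` is `μ`-distinguished: there are `ν ∈ 𝒫^{(2)}` and `δ ∈ 𝒫^{(1,1)}` with
`φ(b) = ν - μ` and `ε(b) = δ - μ`, as equalities of weights written in the basis of the
fundamental weights `ω_i` (a partition `κ` having `ω_i`-coefficient `coord κ i`). -/
def Distinguished {lam : YoungDiagram} (b : SemistandardYoungTableau lam)
    (μ : YoungDiagram) : Prop :=
  ∃ ν δ : YoungDiagram, EvenParts ν ∧ EvenMult δ ∧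
    (∀ i, 1 ≤ i → coord ν i = phi i b + coord μ i) ∧
    (∀ i, 1 ≤ i → coord δ i = eps i b + coord μ i)

/-- The coefficient of `ω_i` in `μ_b = Σ_i (φ_{2i}(b) mod 2) ω_{2i}`. -/
def muBcoord {lam : YoungDiagram} (b : SemistandardYoungTableau lam) (i : ℕ) : ℕ :=
  if Even i ∧ 1 ≤ i then phi i b % 2 else 0

/-- The size `|φ(b) + μ_b|` of the weight `φ(b) + μ_b` (a column of height `i`, i.e. the
fundamental weight `ω_i`, contributing `i` boxes). -/
def statB {lam : YoungDiagram} (b : SemistandardYoungTableau lam) : ℕ :=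
  ∑ᶠ i : ℕ, i * (phi i b + muBcoord b i)

/-- `κ ≤_⊞ μ`, i.e. `μ - κ ∈ 𝒫^{⊞} = 𝒫^{(2)} ∩ 𝒫^{(1,1)}`; in terms of the coefficients of
the fundamental weights: the difference `μ - κ` is nonnegative, vanishes in each odd
coordinate, and is even in each coordinate. -/
def leB (κ μ : YoungDiagram) : Prop :=
  ∀ i, 1 ≤ i → coord κ i ≤ coord μ i ∧ (Odd i → coord κ i = coord μ i) ∧
    Even (coord μ i - coord κ i)

/-! ### Auxiliary lemmas -/

/-- Suffix sums of a coordinate function. -/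
def sufSum (c : ℕ → ℕ) (N i : ℕ) : ℕ := ∑ k ∈ Finset.Ico (i + 1) N, c k

lemma sufSum_anti (c : ℕ → ℕ) (N : ℕ) {i j : ℕ} (h : i ≤ j) :
    sufSum c N j ≤ sufSum c N i :=
  Finset.sum_le_sum_of_subset (Finset.Ico_subset_Ico (by omega) le_rfl)

lemma sufSum_eq_zero (c : ℕ → ℕ) (N i : ℕ) (h : N ≤ i + 1) : sufSum c N i = 0 := by
  rw [sufSum, Finset.Ico_eq_empty (by omega), Finset.sum_empty]

lemma sufSum_succ (c : ℕ → ℕ) (N i : ℕ) (hc : ∀ j, N ≤ j → c j = 0) :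
    sufSum c N i = c (i + 1) + sufSum c N (i + 1) := by
  by_cases h : i + 1 < N
  · exact Finset.sum_eq_sum_Ico_succ_bot h c
  · rw [sufSum_eq_zero c N i (by omega), sufSum_eq_zero c N (i + 1) (by omega),
      hc (i + 1) (by omega)]

/-- The Young diagram whose row lengths are the suffix sums of `c` (truncated at `N`). -/
def diagOf (c : ℕ → ℕ) (N : ℕ) : YoungDiagram where
  cells := (Finset.range N ×ˢ Finset.range (sufSum c N 0 + 1)).filter
    fun p => p.2 < sufSum c N p.1
  isLowerSet := by
    rintro ⟨i1, j1⟩ ⟨i2, j2⟩ hle hmem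
    simp only [Finset.coe_filter, Finset.mem_product, Finset.mem_range, Set.mem_setOf_eq,
      Finset.mem_coe] at hmem ⊢
    obtain ⟨hi1, hi2⟩ := hle
    simp only at hi1 hi2
    refine ⟨⟨by omega, by omega⟩, ?_⟩
    exact lt_of_le_of_lt hi2 (lt_of_lt_of_le hmem.2 (sufSum_anti c N hi1))

lemma mem_diagOf (c : ℕ → ℕ) (N i j : ℕ) :
    (i, j) ∈ diagOf c N ↔ j < sufSum c N i := by
  have hrfl : ((i, j) ∈ diagOf c N) ↔
      ((i, j) ∈ (Finset.range N ×ˢ Finset.range (sufSum c N 0 + 1)).filter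
        fun p => p.2 < sufSum c N p.1) := Iff.rfl
  rw [hrfl, Finset.mem_filter, Finset.mem_product, Finset.mem_range, Finset.mem_range]
  constructor
  · rintro ⟨-, h⟩; exact h
  · intro h
    have hiN : i + 1 < N + 1 := by
      by_contra hcon
      rw [sufSum_eq_zero c N i (by omega)] at h; omega
    have hj : j < sufSum c N 0 + 1 := by
      have := sufSum_anti c N (Nat.zero_le i); omega
    exact ⟨⟨by omega, hj⟩, h⟩

lemma rowLen_diagOf (c : ℕ → ℕ) (N i : ℕ) : (diagOf c N).rowLen i = sufSum c N i := by
  have h1 := mem_diagOf c N i ((diagOf c N).rowLen i)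
  have h2 := mem_diagOf c N i (sufSum c N i)
  rw [YoungDiagram.mem_iff_lt_rowLen] at h1 h2
  omega

lemma coord_diagOf (c : ℕ → ℕ) (N : ℕ) (hc : ∀ j, N ≤ j → c j = 0) (i : ℕ) (hi : 1 ≤ i) :
    coord (diagOf c N) i = c i := by
  rw [coord, rowLen_diagOf, rowLen_diagOf]
  have hpred : i - 1 + 1 = i := by omega
  have hstep : sufSum c N (i - 1) = c i + sufSum c N i := by
    have := sufSum_succ c N (i - 1) hc
    rwa [hpred] at this
  omega

lemma even_sub_even {a b : ℕ} (ha : Even a) (hb : Even b) (h : b ≤ a) : Even (a - b) := by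
  obtain ⟨x, hx⟩ := ha; obtain ⟨y, hy⟩ := hb; exact ⟨x - y, by omega⟩

lemma even_add_mod_two (n : ℕ) : Even (n + n % 2) := ⟨(n + n % 2) / 2, by omega⟩

lemma muBcoord_odd {lam : YoungDiagram} (b : SemistandardYoungTableau lam) {i : ℕ}
    (hi : Odd i) : muBcoord b i = 0 := by
  rw [muBcoord, if_neg]
  rintro ⟨he, -⟩
  exact (Nat.not_even_iff_odd.mpr hi) he

lemma foldr_max_bound : ∀ (l : List ℕ) (x : ℕ), x ∈ l → x ≤ l.foldr max 0
  | a :: l, x, hx => by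
    rcases List.mem_cons.mp hx with h | h
    · simp [h, List.foldr_cons, le_max_iff]
    · have := foldr_max_bound l x h
      simp only [List.foldr_cons, le_max_iff]
      right; exact this

lemma wordPhi_eq_zero {i : ℕ} {w : List ℕ} (h : i ∉ w) : wordPhi i w = 0 := by
  rw [wordPhi, show (0 : ℕ) = ⊥ from rfl, Finset.sup_eq_bot_iff]
  simp only [Nat.bot_eq_zero]
  intro k _
  have h1 : (w.drop k).count i ≤ w.count i := (List.drop_sublist k w).count_le i
  rw [List.count_eq_zero_of_not_mem h] at h1
  omega

lemma wordEps_eq_zero {i : ℕ} {w : List ℕ} (h : (i + 1) ∉ w) : wordEps i w = 0 := by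
  rw [wordEps, show (0 : ℕ) = ⊥ from rfl, Finset.sup_eq_bot_iff]
  simp only [Nat.bot_eq_zero]
  intro k _
  have h1 : (w.take k).count (i + 1) ≤ w.count (i + 1) := (List.take_sublist k w).count_le _
  rw [List.count_eq_zero_of_not_mem h] at h1
  omega

lemma wordEps_eq_zero_iff (i : ℕ) (w : List ℕ) :
    wordEps i w = 0 ↔ ∀ k, (w.take k).count (i + 1) ≤ (w.take k).count i := by
  rw [wordEps, show (0 : ℕ) = ⊥ from rfl, Finset.sup_eq_bot_iff]
  simp only [Nat.bot_eq_zero]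
  constructor
  · intro h k
    by_cases hk : k ≤ w.length
    · have := h k (Finset.mem_range.mpr (by omega)); omega
    · have := h w.length (Finset.mem_range.mpr (by omega))
      rw [List.take_length] at this
      rw [List.take_of_length_le (by omega)]
      omega
  · intro h k _
    have := h k; omega

lemma take_filter_eq (P : ℕ → Bool) :
    ∀ (w : List ℕ) (p : ℕ), ∃ k, (w.filter P).take p = (w.take k).filter P
  | [], p => ⟨0, by simp⟩
  | x :: w, p => by
    by_cases hx : P x
    · cases p with
      | zero => exact ⟨0, by simp⟩
      | succ q =>
        obtain ⟨k, hk⟩ := take_filter_eq P w q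
        exact ⟨k + 1, by simp [List.filter_cons, hx, hk]⟩
    · obtain ⟨k, hk⟩ := take_filter_eq P w p
      exact ⟨k + 1, by simp [List.filter_cons, hx, hk]⟩

lemma filter_take_eq (P : ℕ → Bool) (w : List ℕ) (k : ℕ) :
    ∃ p, (w.take k).filter P = (w.filter P).take p :=
  ⟨((w.take k).filter P).length, List.prefix_iff_eq_take.mp ((List.take_prefix k w).filter P)⟩

lemma lattice_iff (a b : ℕ) (w : List ℕ) :
    (∀ p, ((w.filter fun x => decide (x = a ∨ x = b)).take p).count b ≤
        ((w.filter fun x => decide (x = a ∨ x = b)).take p).count a) ↔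
      ∀ k, (w.take k).count b ≤ (w.take k).count a := by
  set P : ℕ → Bool := fun x => decide (x = a ∨ x = b) with hP
  have Pa : P a = true := by simp [hP]
  have Pb : P b = true := by simp [hP]
  constructor
  · intro h k
    obtain ⟨p, hp⟩ := filter_take_eq P w k
    have := h p
    rw [← hp, List.count_filter Pb, List.count_filter Pa] at this
    exact this
  · intro h p
    obtain ⟨k, hk⟩ := take_filter_eq P w p
    rw [hk, List.count_filter Pb, List.count_filter Pa]
    exact h k

/-- A semistandard tableau `T` of shape `λ` with positive entries is
distinguished if and only if, for every `i ≥ 1`, the skew tableau obtained by keeping only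
the letters `2i-1` and `2i` in `T` is a reverse lattice skew tableau (its Japanese reading
word — the corresponding subword of the Japanese reading word of `T` — has, in each left
factor, at most as many letters `2i` as letters `2i-1`), and all rows of the partition
`θ(T) = φ(T) + μ_T` have even lengths (equivalently, all the coefficients of `θ(T)` in the
basis of fundamental weights are even). -/
theorem distinguished_iff_reverse_lattice (lam : YoungDiagram)
    (T : SemistandardYoungTableau lam) (hpos : PosEntries T) :
    (∃ μ : YoungDiagram, Distinguished T μ) ↔
      ((∀ i, 1 ≤ i → ∀ p,
          (((jword T).filter fun a => decide (a = 2 * i - 1 ∨ a = 2 * i)).take p).count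
              (2 * i) ≤
            (((jword T).filter fun a => decide (a = 2 * i - 1 ∨ a = 2 * i)).take p).count
              (2 * i - 1)) ∧
        (∀ i, 1 ≤ i → Even (phi i T + muBcoord T i))) := by
  constructor
  · rintro ⟨μ, ν, δ, hν, hδ, hphi, heps⟩
    -- For odd `i`, `eps i T = 0` and `coord μ i = 0`.
    have hodd : ∀ i, 1 ≤ i → Odd i → eps i T = 0 ∧ coord μ i = 0 := by
      intro i h1 hoddi
      obtain ⟨j, hj⟩ := hoddi
      have hδ0 : coord δ i = 0 := by
        rw [coord]
        have := hδ j
        have h2 : i - 1 = 2 * j := by omega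
        have h3 : i = 2 * j + 1 := by omega
        rw [h2, h3, this]
        omega
      have := heps i h1
      omega
    constructor
    · intro i hi
      have he : eps (2 * i - 1) T = 0 :=
        (hodd (2 * i - 1) (by omega) ⟨i - 1, by omega⟩).1
      have h21 : 2 * i - 1 + 1 = 2 * i := by omega
      rw [eps, wordEps_eq_zero_iff, h21] at he
      exact (lattice_iff (2 * i - 1) (2 * i) (jword T)).mpr he
    · intro i hi
      rcases Nat.even_or_odd i with hev | hod
      · have : muBcoord T i = phi i T % 2 := by rw [muBcoord, if_pos ⟨hev, hi⟩]
        rw [this]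
        exact even_add_mod_two _
      · have hmu0 : coord μ i = 0 := (hodd i hi hod).2
        have hνeven : Even (coord ν i) := by
          rw [coord]
          exact even_sub_even (hν (i - 1)) (hν i)
            (ν.rowLen_anti (i - 1) i (by omega))
        rw [hphi i hi, hmu0, add_zero] at hνeven
        rw [muBcoord_odd T hod, add_zero]
        exact hνeven
  · rintro ⟨hlat, heven⟩
    set w := jword T with hw
    set N := w.foldr max 0 + 1 with hN
    have hbound : ∀ x ∈ w, x < N := fun x hx => by
      have := foldr_max_bound w x hx; omega
    have hphi0 : ∀ i, N ≤ i → phi i T = 0 := by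
      intro i hi
      exact wordPhi_eq_zero fun hmem => by have := hbound i hmem; omega
    have heps0 : ∀ i, N ≤ i → eps i T = 0 := by
      intro i hi
      exact wordEps_eq_zero fun hmem => by have := hbound (i + 1) hmem; omega
    have hmu0 : ∀ i, N ≤ i → muBcoord T i = 0 := by
      intro i hi
      rw [muBcoord]
      split
      · rw [hphi0 i hi]
      · rfl
    have hepsodd : ∀ i, Odd i → eps i T = 0 := by
      intro i hoddi
      obtain ⟨j, hj⟩ := hoddi
      have hj1 : 2 * (j + 1) - 1 = i := by omega
      have := (lattice_iff (2 * (j + 1) - 1) (2 * (j + 1)) w).mp (hlat (j + 1) (by omega))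
      rw [eps, wordEps_eq_zero_iff]
      intro k
      have h21 : i + 1 = 2 * (j + 1) := by omega
      rw [h21, ← hj1]
      exact this k
    -- coordinate functions
    have hcμ0 : ∀ j, N ≤ j → muBcoord T j = 0 := fun j hj => hmu0 j hj
    have hcν0 : ∀ j, N ≤ j → (fun i => phi i T + muBcoord T i) j = 0 := fun j hj => by
      simp only [hphi0 j hj, hmu0 j hj]
    have hcδ0 : ∀ j, N ≤ j → (fun i => eps i T + muBcoord T i) j = 0 := fun j hj => by
      simp only [heps0 j hj, hmu0 j hj]
    refine ⟨diagOf (muBcoord T) N, diagOf (fun i => phi i T + muBcoord T i) N,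
      diagOf (fun i => eps i T + muBcoord T i) N, ?_, ?_, ?_, ?_⟩
    · -- EvenParts
      intro i
      rw [rowLen_diagOf, sufSum]
      refine Finset.even_sum _ fun k hk => ?_
      have hk1 : 1 ≤ k := by
        rw [Finset.mem_Ico] at hk; omega
      exact heven k hk1
    · -- EvenMult
      intro i
      rw [rowLen_diagOf, rowLen_diagOf]
      have hz : (fun i => eps i T + muBcoord T i) (2 * i + 1) = 0 := by
        simp only
        rw [hepsodd (2 * i + 1) ⟨i, by ring⟩, muBcoord_odd T ⟨i, by ring⟩]
      have hs := sufSum_succ (fun i => eps i T + muBcoord T i) N (2 * i) hcδ0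
      rw [show eps (2 * i + 1) T + muBcoord T (2 * i + 1) = 0 from hz, zero_add] at hs
      rw [hs]
    · intro i hi
      rw [coord_diagOf _ N hcν0 i hi, coord_diagOf _ N hcμ0 i hi]
    · intro i hi
      rw [coord_diagOf _ N hcδ0 i hi, coord_diagOf _ N hcμ0 i hi]

end GE
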